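/- Let G be a finite group, N a normal subgroup of G, and A, B conjugacy classes of G. Suppose there exist a ∈ A and b ∈ B such that AB ⊆ ab·Z(N). Then [N,N] ⊆ C_N(A) ∩ C_N(B); in particular, the quotient N/C_N(A) is abelian. -/

import Mathlib

open Pointwise
open scoped commutatorElement

/-- The conjugacy class of `a` in `G`. -/
def conjClass {G : Type*} [Group G] (a : G) : Set G := {x | ∃ g : G, g⁻¹ * a * g = x}

lemma aux_comm {G : Type*} [Group G] (u v x y : G)
    (h1 : Commute u x) (h2 : Commute u y) (h3 : Commute u v)
    (h4 : Commute v x) (h5 : Commute v y) :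
    (u*x)*(v*y)*((u*x)⁻¹*(v*y)⁻¹) = x*y*(x⁻¹*y⁻¹) := by
  have key1 : Commute u (x*(v*(y*x⁻¹))) :=
    h1.mul_right (h3.mul_right (h2.mul_right h1.inv_right))
  have key2 : Commute v (y*(x⁻¹*y⁻¹)) :=
    h5.mul_right (h4.inv_right.mul_right h5.inv_right)
  calc (u*x)*(v*y)*((u*x)⁻¹*(v*y)⁻¹)
      = (u*(x*(v*(y*x⁻¹)))*u⁻¹)*(y⁻¹*v⁻¹) := by group
    _ = (x*(v*(y*x⁻¹)))*(y⁻¹*v⁻¹) := by rw [key1.mul_inv_cancel]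
    _ = x*(v*(y*(x⁻¹*y⁻¹))*v⁻¹) := by group
    _ = x*(y*(x⁻¹*y⁻¹)) := by rw [key2.mul_inv_cancel]
    _ = x*y*(x⁻¹*y⁻¹) := by group

/-- if `A`, `B` are conjugacy classes of a finite group `G`, `N ⊴ G`,
and there are `a ∈ A`, `b ∈ B` with `AB ⊆ ab·Z(N)`, then
`[N,N] ⊆ C_N(A) ∩ C_N(B)`; in particular `N/C_N(A)` is abelian. -/
theorem stmt1 {G : Type*} [Group G] [Fintype G] (N : Subgroup G) [N.Normal]
    (A B : Set G) (hA : ∃ x : G, A = conjClass x) (hB : ∃ x : G, B = conjClass x)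
    (h : ∃ a ∈ A, ∃ b ∈ B,
      A * B ⊆ {a * b} * ((N ⊓ Subgroup.centralizer (N : Set G) : Subgroup G) : Set G)) :
    ⁅N, N⁆ ≤ (N ⊓ Subgroup.centralizer A) ⊓ (N ⊓ Subgroup.centralizer B) ∧
      ∀ x y : ↥N, (⁅(x : G), (y : G)⁆ : G) ∈ N ⊓ Subgroup.centralizer A := by
  classical
  set Z : Subgroup G := N ⊓ Subgroup.centralizer (N : Set G) with hZdef
  obtain ⟨a, ha, b, hb, hsub⟩ := h
  -- Z is normal in G
  have hZconj : ∀ z ∈ Z, ∀ g : G, g * z * g⁻¹ ∈ Z := by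
    intro z hz g
    obtain ⟨hzN, hzC⟩ := Subgroup.mem_inf.mp hz
    refine Subgroup.mem_inf.mpr ⟨‹N.Normal›.conj_mem z hzN g, ?_⟩
    rw [Subgroup.mem_centralizer_iff]
    intro m hm
    have hm' : g⁻¹ * m * g ∈ N := by
      have := ‹N.Normal›.conj_mem m hm g⁻¹
      simpa using this
    have hc : (g⁻¹ * m * g) * z = z * (g⁻¹ * m * g) :=
      Subgroup.mem_centralizer_iff.mp hzC _ hm'
    have : g * ((g⁻¹ * m * g) * z) * g⁻¹ = g * (z * (g⁻¹ * m * g)) * g⁻¹ := by rw [hc]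
    calc m * (g * z * g⁻¹) = g * ((g⁻¹ * m * g) * z) * g⁻¹ := by group
      _ = g * (z * (g⁻¹ * m * g)) * g⁻¹ := this
      _ = (g * z * g⁻¹) * m := by group
  -- conjugacy classes are closed under conjugation
  have hAconj : ∀ a' ∈ A, ∀ g : G, g⁻¹ * a' * g ∈ A := by
    obtain ⟨x, rfl⟩ := hA
    rintro a' ⟨g0, rfl⟩ g
    exact ⟨g0 * g, by group⟩
  have hBconj : ∀ b' ∈ B, ∀ g : G, g⁻¹ * b' * g ∈ B := by
    obtain ⟨x, rfl⟩ := hB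
    rintro b' ⟨g0, rfl⟩ g
    exact ⟨g0 * g, by group⟩
  -- extraction of the Z-part
  have hmem : ∀ a' ∈ A, ∀ b' ∈ B, (a * b)⁻¹ * (a' * b') ∈ Z := by
    intro a' ha' b' hb'
    have := hsub (Set.mul_mem_mul ha' hb')
    obtain ⟨p, hp, z, hzZ, hpz⟩ := this
    rw [Set.mem_singleton_iff] at hp
    subst hp
    have : (a * b)⁻¹ * (a' * b') = z := by rw [← hpz]; group
    rw [this]; exact hzZ
  -- key hypothesis for elements of A
  have HA : ∀ a' ∈ A, ∀ n ∈ N, a'⁻¹ * n⁻¹ * a' * n ∈ Z := by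
    intro a' ha' n hn
    have h1 : (a * b)⁻¹ * (a' * b) ∈ Z := hmem a' ha' b hb
    have h2 : (a * b)⁻¹ * ((n⁻¹ * a' * n) * b) ∈ Z := hmem _ (hAconj a' ha' n) b hb
    have h3 : ((a * b)⁻¹ * (a' * b))⁻¹ * ((a * b)⁻¹ * ((n⁻¹ * a' * n) * b)) ∈ Z :=
      Z.mul_mem (Z.inv_mem h1) h2
    have e : ((a * b)⁻¹ * (a' * b))⁻¹ * ((a * b)⁻¹ * ((n⁻¹ * a' * n) * b))
        = b⁻¹ * (a'⁻¹ * n⁻¹ * a' * n) * b := by group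
    rw [e] at h3
    have := hZconj _ h3 b
    have e2 : b * (b⁻¹ * (a'⁻¹ * n⁻¹ * a' * n) * b) * b⁻¹ = a'⁻¹ * n⁻¹ * a' * n := by group
    rwa [e2] at this
  -- key hypothesis for elements of B
  have HB : ∀ b' ∈ B, ∀ n ∈ N, b'⁻¹ * n⁻¹ * b' * n ∈ Z := by
    intro b' hb' n hn
    have h1 : (a * b)⁻¹ * (a * b') ∈ Z := hmem a ha b' hb'
    have h2 : (a * b)⁻¹ * (a * (n⁻¹ * b' * n)) ∈ Z := hmem a ha _ (hBconj b' hb' n)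
    have h3 := Z.mul_mem (Z.inv_mem h1) h2
    have e : ((a * b)⁻¹ * (a * b'))⁻¹ * ((a * b)⁻¹ * (a * (n⁻¹ * b' * n)))
        = b'⁻¹ * n⁻¹ * b' * n := by group
    rwa [e] at h3
  -- from the key hypothesis, c commutes with commutators of N
  have P : ∀ c : G, (∀ n ∈ N, c⁻¹ * n⁻¹ * c * n ∈ Z) →
      ∀ x y : G, x ∈ N → y ∈ N → c * ⁅x, y⁆ = ⁅x, y⁆ * c := by
    intro c hc x y hx hy
    have hu' : ∀ w ∈ N, c * w * c⁻¹ * w⁻¹ ∈ Z := by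
      intro w hw
      have h0 := hc w⁻¹ (N.inv_mem hw)
      have h1 := hZconj _ h0 c
      have h2 := Z.inv_mem h1
      have e : (c * (c⁻¹ * w⁻¹⁻¹ * c * w⁻¹) * c⁻¹)⁻¹ = c * w * c⁻¹ * w⁻¹ := by group
      rwa [e] at h2
    set u := c * x * c⁻¹ * x⁻¹ with hu
    set v := c * y * c⁻¹ * y⁻¹ with hv
    have huZ : u ∈ Z := hu' x hx
    have hvZ : v ∈ Z := hu' y hy
    have commZ : ∀ z ∈ Z, ∀ m ∈ N, Commute z m := by
      intro z hz m hm
      exact (Subgroup.mem_centralizer_iff.mp hz.2 m hm).symm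
    have h1 : Commute u x := commZ u huZ x hx
    have h2 : Commute u y := commZ u huZ y hy
    have h3 : Commute u v := commZ u huZ v hvZ.1
    have h4 : Commute v x := commZ v hvZ x hx
    have h5 : Commute v y := commZ v hvZ y hy
    have s1 : SemiconjBy c x (u * x) := by
      unfold SemiconjBy; rw [hu]; group
    have s2 : SemiconjBy c y (v * y) := by
      unfold SemiconjBy; rw [hv]; group
    have s : SemiconjBy c (x * y * (x⁻¹ * y⁻¹))
        ((u * x) * (v * y) * ((u * x)⁻¹ * (v * y)⁻¹)) :=
      (s1.mul_right s2).mul_right (s1.inv_right.mul_right s2.inv_right)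
    rw [aux_comm u v x y h1 h2 h3 h4 h5] at s
    have e : ⁅x, y⁆ = x * y * (x⁻¹ * y⁻¹) := by
      rw [commutatorElement_def]; group
    rw [e]
    exact s
  have main : ∀ g ∈ N, ∀ k ∈ N,
      ⁅g, k⁆ ∈ (N ⊓ Subgroup.centralizer A) ⊓ (N ⊓ Subgroup.centralizer B) := by
    intro g hg k hk
    have hmemN : ⁅g, k⁆ ∈ N := by
      rw [commutatorElement_def]
      exact N.mul_mem (N.mul_mem (N.mul_mem hg hk) (N.inv_mem hg)) (N.inv_mem hk)
    refine Subgroup.mem_inf.mpr ⟨Subgroup.mem_inf.mpr ⟨hmemN, ?_⟩,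
      Subgroup.mem_inf.mpr ⟨hmemN, ?_⟩⟩
    · exact Subgroup.mem_centralizer_iff.mpr fun a' ha' => P a' (HA a' ha') g k hg hk
    · exact Subgroup.mem_centralizer_iff.mpr fun b' hb' => P b' (HB b' hb') g k hg hk
  constructor
  · rw [Subgroup.commutator_le]
    exact main
  · intro x y
    exact ((main x x.2 y y.2).1 : _)
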